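/- The Radon measure μ_α with density (1+|r|²/2)^{−α} satisfies, for every φ ∈ C_c²(ℝ^d), ∫_{ℝ^d}(1+|r|²/2)^{−α}[−α r·∇φ(r) + Δφ(r) + (1/2)div_r(A_b(r)∇φ(r))] dr = 0; i.e., μ_α is a distributional solution of div_r(α r μ + ∇_r μ + (1/2)A_b(r)∇_r μ) = 0. -/

import Mathlib

set_option maxHeartbeats 1000000


open MeasureTheory
open scoped RealInnerProductSpace

noncomputable def stretchMat {d : ℕ} (b : ℝ) (r v : EuclideanSpace ℝ (Fin d)) :
    EuclideanSpace ℝ (Fin d) :=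
  ((b + 1) * ‖r‖ ^ 2) • v - (b * ⟪r, v⟫) • r

/-- Divergence of a vector field on `ℝ^d`. -/
noncomputable def eucDiv {d : ℕ}
    (F : EuclideanSpace ℝ (Fin d) → EuclideanSpace ℝ (Fin d))
    (r : EuclideanSpace ℝ (Fin d)) : ℝ :=
  ∑ i, (fderiv ℝ F r (EuclideanSpace.single i (1 : ℝ))) i

theorem integral_eucDiv_eq_zero {d : ℕ} {F : EuclideanSpace ℝ (Fin d) → EuclideanSpace ℝ (Fin d)}
    (hF : ContDiff ℝ 1 F) (hFs : HasCompactSupport F) :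
    ∫ x, eucDiv F x = 0 := by
  have hdF : Continuous (fderiv ℝ F) := hF.continuous_fderiv one_ne_zero
  have hdFs : HasCompactSupport (fderiv ℝ F) := hFs.fderiv ℝ
  have hInt : ∀ (i j : Fin d), Integrable
      (fun x => (fderiv ℝ F x (EuclideanSpace.single i (1:ℝ))) j) := by
    intro i j
    have hc : Continuous (fun x => (fderiv ℝ F x (EuclideanSpace.single i (1:ℝ))) j) :=
      (EuclideanSpace.proj (𝕜 := ℝ) j).continuous.comp
        (((ContinuousLinearMap.apply ℝ (EuclideanSpace ℝ (Fin d))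
          (EuclideanSpace.single i (1:ℝ))).continuous).comp hdF)
    have hs : HasCompactSupport (fun x => (fderiv ℝ F x (EuclideanSpace.single i (1:ℝ))) j) := by
      have := hdFs.comp_left (g := fun L : EuclideanSpace ℝ (Fin d) →L[ℝ] EuclideanSpace ℝ (Fin d)
        => (L (EuclideanSpace.single i (1:ℝ))) j) (by simp)
      simpa [Function.comp_def] using this
    exact hc.integrable_of_hasCompactSupport hs
  unfold eucDiv
  rw [integral_finset_sum _ (fun i _ => hInt i i)]
  refine Finset.sum_eq_zero fun i _ => ?_
  set g : EuclideanSpace ℝ (Fin d) → ℝ := fun x => F x i with hg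
  have hgF : ∀ x, HasFDerivAt g ((EuclideanSpace.proj (𝕜 := ℝ) i).comp (fderiv ℝ F x)) x :=
    fun x => (EuclideanSpace.proj (𝕜 := ℝ) i).hasFDerivAt.comp x
      ((hF.differentiable one_ne_zero x).hasFDerivAt)
  have hgd : ∀ x, fderiv ℝ g x = ((EuclideanSpace.proj (𝕜 := ℝ) i).comp (fderiv ℝ F x)) :=
    fun x => (hgF x).fderiv
  have hgd' : ∀ x, fderiv ℝ g x (EuclideanSpace.single i (1:ℝ))
      = (fderiv ℝ F x (EuclideanSpace.single i (1:ℝ))) i := by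
    intro x; rw [hgd x]; rfl
  have key := integral_mul_fderiv_eq_neg_fderiv_mul_of_integrable
    (μ := volume) (f := fun _ : EuclideanSpace ℝ (Fin d) => (1:ℝ)) (g := g)
    (v := EuclideanSpace.single i (1:ℝ))
    ?_ ?_ ?_ (fun x _ => differentiableAt_const _) (fun x _ => (hgF x).differentiableAt)
  · simp only [one_mul, hgd'] at key
    simpa [fderiv_const] using key
  · simpa [fderiv_const] using (integrable_zero _ _ (volume : Measure (EuclideanSpace ℝ (Fin d))))
  · simp only [one_mul]
    simpa only [hgd'] using hInt i i
  · simp only [one_mul]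
    refine Continuous.integrable_of_hasCompactSupport ?_ ?_
    · exact (EuclideanSpace.proj (𝕜 := ℝ) i).continuous.comp hF.continuous
    · have := hFs.comp_left (g := fun w : EuclideanSpace ℝ (Fin d) => w i) rfl
      simpa [Function.comp_def] using this

/-- the measure with density `(1+|r|²/2)^(−α)` is a distributional
solution of `div_r(α r μ + ∇_r μ + ½ A_b(r) ∇_r μ) = 0`: for every
`φ ∈ C_c²(ℝ^d)`,
`∫ (1+|r|²/2)^(−α) [−α r·∇φ + Δφ + ½ div(A_b ∇φ)] dr = 0`. -/
theorem cauchy_measure_is_stationary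
    (d : ℕ) (hd : d = 2 ∨ d = 3) (b : ℝ) (hb : b = 1 ∨ b = 2)
    (α : ℝ) (hα : 0 < α)
    (φ : EuclideanSpace ℝ (Fin d) → ℝ)
    (hφ : ContDiff ℝ 2 φ) (hsupp : HasCompactSupport φ) :
    ∫ r : EuclideanSpace ℝ (Fin d),
      (1 + ‖r‖ ^ 2 / 2) ^ (-α) *
        (-α * ⟪r, gradient φ r⟫ + eucDiv (fun x => gradient φ x) r +
          (1 / 2 : ℝ) * eucDiv (fun x => stretchMat b x (gradient φ x)) r) = 0 := by
  classical
  -- gradient facts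
  have hφ1 : ContDiff ℝ 1 (fderiv ℝ φ) := hφ.fderiv_right (by norm_num)
  have hgrad_eq : gradient φ = fun x : EuclideanSpace ℝ (Fin d) => (InnerProductSpace.toDual ℝ (EuclideanSpace ℝ (Fin d))).symm (fderiv ℝ φ x) :=
    rfl
  have hg : ContDiff ℝ 1 (gradient φ) := by
    rw [hgrad_eq]
    exact ((InnerProductSpace.toDual ℝ (EuclideanSpace ℝ (Fin d))).symm.toLinearIsometry.contDiff).comp hφ1
  have hgs : HasCompactSupport (gradient φ) := by
    have := (hsupp.fderiv ℝ).comp_left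
      (g := fun L : EuclideanSpace ℝ (Fin d) →L[ℝ] ℝ => (InnerProductSpace.toDual ℝ (EuclideanSpace ℝ (Fin d))).symm L) (by simp)
    simpa [Function.comp_def, hgrad_eq] using this
  -- the density
  set ρ : EuclideanSpace ℝ (Fin d) → ℝ := fun x => (1 + ‖x‖ ^ 2 / 2) ^ (-α) with hρdef
  have hupos : ∀ x : EuclideanSpace ℝ (Fin d), (0:ℝ) < 1 + ‖x‖ ^ 2 / 2 := fun x => by positivity
  have huC : ContDiff ℝ 1 (fun x : EuclideanSpace ℝ (Fin d) => 1 + ‖x‖ ^ 2 / 2) :=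
    contDiff_const.add ((contDiff_norm_sq (𝕜 := ℝ)).div_const 2)
  have hρC : ContDiff ℝ 1 ρ := contDiff_iff_contDiffAt.2 fun x =>
    (huC.contDiffAt).rpow_const_of_ne (ne_of_gt (hupos x))
  have hρF : ∀ x : EuclideanSpace ℝ (Fin d), HasFDerivAt ρ
      ((-α * (1 + ‖x‖ ^ 2 / 2) ^ (-α - 1)) • (innerSL ℝ x : EuclideanSpace ℝ (Fin d) →L[ℝ] ℝ)) x := by
    intro x
    have h2 : HasFDerivAt (fun y : EuclideanSpace ℝ (Fin d) => ‖y‖ ^ 2) (2 • innerSL ℝ x) x :=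
      (hasStrictFDerivAt_norm_sq x).hasFDerivAt
    have h1 : HasFDerivAt (fun y : EuclideanSpace ℝ (Fin d) => 1 + ‖y‖ ^ 2 / 2) (innerSL ℝ x : EuclideanSpace ℝ (Fin d) →L[ℝ] ℝ) x := by
      have h0 : (innerSL ℝ x : EuclideanSpace ℝ (Fin d) →L[ℝ] ℝ)
          = (2⁻¹:ℝ) • ((2:ℕ) • (innerSL ℝ x : EuclideanSpace ℝ (Fin d) →L[ℝ] ℝ)) := by
        ext v
        simp
      rw [h0]
      have := (h2.const_mul (2⁻¹:ℝ)).const_add 1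
      refine this.congr_of_eventuallyEq (Filter.Eventually.of_forall fun y => ?_)
      show 1 + ‖y‖ ^ 2 / 2 = 1 + 2⁻¹ * ‖y‖ ^ 2
      ring
    have h3 : HasDerivAt (fun t : ℝ => t ^ (-α))
        (-α * (1 + ‖x‖ ^ 2 / 2) ^ (-α - 1)) (1 + ‖x‖ ^ 2 / 2) :=
      Real.hasDerivAt_rpow_const (Or.inl (ne_of_gt (hupos x)))
    exact h3.comp_hasFDerivAt x h1
  -- the stretched field
  set S : EuclideanSpace ℝ (Fin d) → EuclideanSpace ℝ (Fin d) := fun x => stretchMat b x (gradient φ x) with hSdef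
  have hSC : ContDiff ℝ 1 S := by
    rw [hSdef]; unfold stretchMat
    exact ((contDiff_const.mul (contDiff_norm_sq (𝕜 := ℝ))).smul hg).sub
      ((contDiff_const.mul (ContDiff.inner ℝ contDiff_id hg)).smul contDiff_id)
  set Fv : EuclideanSpace ℝ (Fin d) → EuclideanSpace ℝ (Fin d) := fun x => gradient φ x + (2⁻¹ : ℝ) • S x with hFvdef
  set G : EuclideanSpace ℝ (Fin d) → EuclideanSpace ℝ (Fin d) := fun x => ρ x • Fv x with hGdef
  have hFvC : ContDiff ℝ 1 Fv := hg.add (hSC.const_smul (2⁻¹ : ℝ))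
  have hGC : ContDiff ℝ 1 G := hρC.smul hFvC
  have hGs : HasCompactSupport G := by
    apply hgs.mono'
    intro x hx
    apply subset_closure
    simp only [Function.mem_support] at hx ⊢
    intro hzero
    apply hx
    simp only [hGdef, hFvdef, hSdef, stretchMat, hzero, inner_zero_right, smul_zero, mul_zero,
      zero_smul, sub_zero, zero_add, add_zero, smul_eq_mul]
  -- pointwise identity
  have hpt : ∀ x : EuclideanSpace ℝ (Fin d),
      (1 + ‖x‖ ^ 2 / 2) ^ (-α) *
        (-α * ⟪x, gradient φ x⟫ + eucDiv (fun y => gradient φ y) x +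
          (1 / 2 : ℝ) * eucDiv (fun y => stretchMat b y (gradient φ y)) x) = eucDiv G x := by
    intro x
    have hFvF : HasFDerivAt Fv (fderiv ℝ Fv x) x := (hFvC.differentiable one_ne_zero x).hasFDerivAt
    have hGF : HasFDerivAt G
        (ρ x • fderiv ℝ Fv x +
          ((-α * (1 + ‖x‖ ^ 2 / 2) ^ (-α - 1)) • (innerSL ℝ x : EuclideanSpace ℝ (Fin d) →L[ℝ] ℝ)).smulRight (Fv x)) x :=
      (hρF x).smul hFvF
    have hfdG : fderiv ℝ G x = ρ x • fderiv ℝ Fv x +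
        ((-α * (1 + ‖x‖ ^ 2 / 2) ^ (-α - 1)) • (innerSL ℝ x : EuclideanSpace ℝ (Fin d) →L[ℝ] ℝ)).smulRight (Fv x) :=
      hGF.fderiv
    have hfdFv : fderiv ℝ Fv x = fderiv ℝ (gradient φ) x + (2⁻¹ : ℝ) • fderiv ℝ S x := by
      rw [hFvdef]
      rw [fderiv_fun_add ((hg.differentiable one_ne_zero).differentiableAt)
        (((hSC.const_smul (2⁻¹ : ℝ)).differentiable one_ne_zero).differentiableAt)]
      congr 1
      rw [fderiv_fun_const_smul ((hSC.differentiable one_ne_zero).differentiableAt)]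
    have expand : ∀ i : Fin d,
        (fderiv ℝ G x (EuclideanSpace.single i (1:ℝ))) i
          = ρ x * ((fderiv ℝ (gradient φ) x (EuclideanSpace.single i (1:ℝ))) i
              + 2⁻¹ * (fderiv ℝ S x (EuclideanSpace.single i (1:ℝ))) i)
            + (-α * (1 + ‖x‖ ^ 2 / 2) ^ (-α - 1)) * (x i * Fv x i) := by
      intro i
      rw [hfdG, hfdFv]
      simp only [ContinuousLinearMap.add_apply, ContinuousLinearMap.coe_smul',
        Pi.smul_apply, ContinuousLinearMap.smulRight_apply, ContinuousLinearMap.smul_apply,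
        innerSL_apply_apply, PiLp.add_apply, PiLp.smul_apply, smul_eq_mul]
      rw [EuclideanSpace.inner_single_right]
      simp
      ring
    have hsum : eucDiv G x
        = ρ x * (eucDiv (gradient φ) x + 2⁻¹ * eucDiv S x)
          + (-α * (1 + ‖x‖ ^ 2 / 2) ^ (-α - 1)) * ⟪x, Fv x⟫ := by
      unfold eucDiv
      rw [Finset.sum_congr rfl (fun i _ => expand i), Finset.sum_add_distrib,
        ← Finset.mul_sum, ← Finset.mul_sum, Finset.sum_add_distrib, ← Finset.mul_sum,
        PiLp.inner_apply]
      simp only [RCLike.inner_apply', starRingEnd_apply, star_trivial]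
    have hxFv : ⟪x, Fv x⟫ = ⟪x, gradient φ x⟫ * (1 + ‖x‖ ^ 2 / 2) := by
      simp only [hFvdef, hSdef, stretchMat]
      rw [inner_add_right, inner_smul_right, inner_sub_right, inner_smul_right,
        inner_smul_right, real_inner_self_eq_norm_sq]
      ring
    have hrpow : (1 + ‖x‖ ^ 2 / 2) ^ (-α) = (1 + ‖x‖ ^ 2 / 2) ^ (-α - 1) * (1 + ‖x‖ ^ 2 / 2) := by
      rw [← Real.rpow_add_one (ne_of_gt (hupos x)) (-α - 1)]
      norm_num
    rw [hsum, hxFv]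
    simp only [hρdef]
    rw [hrpow]
    ring
  exact (integral_congr_ae (ae_of_all _ hpt)).trans (integral_eucDiv_eq_zero hGC hGs)
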